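/- Let C_1,…,C_q ∈ ℂ^{r×c} be matrices such that Σ_{i=1}^q C_i C_i* = I_r. Then Σ_{i≠j, i,j∈[q]} ‖C_i* C_j‖₂² ≤ r(1 − 1/q). -/

import Mathlib

open Matrix BigOperators
open scoped ComplexOrder

noncomputable section

/-- `‖M‖₂² = tr (M M*)` for a square complex matrix. -/
def sqNorm {k : ℕ} (M : Matrix (Fin k) (Fin k) ℂ) : ℝ := ((M * Mᴴ).trace).re

/-- Claim 3.7: cross terms of a row-normalized collection of blocks. -/
theorem cross_terms_bound {q r c : ℕ} (hq : 0 < q)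
    (C : Fin q → Matrix (Fin r) (Fin c) ℂ)
    (hC : ∑ i, C i * (C i)ᴴ = 1) :
    (∑ i, ∑ j, if i = j then 0 else sqNorm ((C i)ᴴ * C j))
      ≤ (r : ℝ) * (1 - 1 / (q : ℝ)) := by
  set A : Fin q → Matrix (Fin r) (Fin r) ℂ := fun i => C i * (C i)ᴴ with hA
  -- rewrite each summand as a trace of a product of the Gram matrices
  have h1 : ∀ i j, sqNorm ((C i)ᴴ * C j) = ((A j * A i).trace).re := by
    intro i j
    unfold sqNorm
    rw [conjTranspose_mul, conjTranspose_conjTranspose]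
    congr 1
    have : (C i)ᴴ * C j * ((C j)ᴴ * C i) = (C i)ᴴ * (C j * ((C j)ᴴ * (C i))) := by
      simp only [Matrix.mul_assoc]
    rw [this, trace_mul_comm]
    simp only [hA, Matrix.mul_assoc]
  -- the Gram matrices are Hermitian with real nonnegative "squared traces"
  have hherm : ∀ i, (A i)ᴴ = A i := by
    intro i; simp [hA, conjTranspose_mul]
  have hAA : ∀ i, ((A i * A i).trace).re
      = ∑ k, ∑ l, Complex.normSq (A i k l) := by
    intro i
    have : (A i * A i).trace = ∑ k, ∑ l, A i k l * A i l k := by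
      simp [Matrix.trace, Matrix.diag, Matrix.mul_apply]
    rw [this]
    rw [Complex.re_sum]
    refine Finset.sum_congr rfl fun k _ => ?_
    rw [Complex.re_sum]
    refine Finset.sum_congr rfl fun l _ => ?_
    have : A i l k = starRingEnd ℂ (A i k l) := by
      conv_lhs => rw [← hherm i]
      simp [conjTranspose_apply]
    rw [this, Complex.mul_conj]
    simp
  -- diagonal terms bound from below
  have hdiag : ∀ i, ((A i).trace).re ^ 2 ≤ (r : ℝ) * ((A i * A i).trace).re := by
    intro i
    have h2 : ∑ k, (A i k k).re ^ 2 ≤ ((A i * A i).trace).re := by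
      rw [hAA i]
      refine Finset.sum_le_sum fun k _ => ?_
      calc (A i k k).re ^ 2 ≤ Complex.normSq (A i k k) := by
            rw [Complex.normSq_apply]; nlinarith [sq_nonneg (A i k k).im]
        _ ≤ ∑ l, Complex.normSq (A i k l) := by
            refine Finset.single_le_sum (fun l _ => Complex.normSq_nonneg _) (Finset.mem_univ k)
    have h3 : ((A i).trace).re = ∑ k, (A i k k).re := by
      simp [Matrix.trace, Matrix.diag, Complex.re_sum]
    rw [h3]
    calc (∑ k, (A i k k).re) ^ 2 ≤ ((Finset.univ : Finset (Fin r)).card : ℝ) * ∑ k, (A i k k).re ^ 2 := by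
          exact_mod_cast sq_sum_le_card_mul_sum_sq (s := Finset.univ) (f := fun k => (A i k k).re)
      _ ≤ (r : ℝ) * ((A i * A i).trace).re := by
          rw [Finset.card_univ, Fintype.card_fin]
          exact mul_le_mul_of_nonneg_left h2 (by positivity)
  -- total sum of traces equals r
  have htot : ∑ i, ∑ j, ((A j * A i).trace).re = (r : ℝ) := by
    have hsum : ∑ i, ∑ j, (A j * A i) = (1 : Matrix (Fin r) (Fin r) ℂ) := by
      have : ∑ i, ∑ j, (A j * A i) = (∑ j, A j) * (∑ i, A i) := by
        rw [Finset.sum_mul]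
        rw [Finset.sum_comm]
        refine Finset.sum_congr rfl fun j _ => ?_
        rw [Finset.mul_sum]
      rw [this, hC, one_mul]
    have := congrArg (fun M => (Matrix.trace M).re) hsum
    simpa [Matrix.trace_sum, Complex.re_sum] using this
  -- trace of each A i sums to r
  have htr : ∑ i, ((A i).trace).re = (r : ℝ) := by
    have := congrArg (fun M => (Matrix.trace M).re) hC
    simpa [Matrix.trace_sum, Complex.re_sum] using this
  -- set D = diagonal sum
  set D : ℝ := ∑ i, ((A i * A i).trace).re with hD
  have hDnn : 0 ≤ D := by
    refine Finset.sum_nonneg fun i _ => ?_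
    rw [hAA i]
    exact Finset.sum_nonneg fun k _ => Finset.sum_nonneg fun l _ => Complex.normSq_nonneg _
  have hrD : (r : ℝ) ^ 2 ≤ (q : ℝ) * ((r : ℝ) * D) := by
    have h4 : ∑ i, ((A i).trace).re ^ 2 ≤ (r : ℝ) * D := by
      rw [hD, Finset.mul_sum]
      exact Finset.sum_le_sum fun i _ => hdiag i
    have h5 : (∑ i, ((A i).trace).re) ^ 2
        ≤ ((Finset.univ : Finset (Fin q)).card : ℝ) * ∑ i, ((A i).trace).re ^ 2 := by
      exact_mod_cast sq_sum_le_card_mul_sum_sq (s := Finset.univ) (f := fun i => ((A i).trace).re)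
    rw [htr] at h5
    rw [Finset.card_univ, Fintype.card_fin] at h5
    calc (r : ℝ) ^ 2 ≤ (q : ℝ) * ∑ i, ((A i).trace).re ^ 2 := h5
      _ ≤ (q : ℝ) * ((r : ℝ) * D) := by
          exact mul_le_mul_of_nonneg_left h4 (by positivity)
  -- rewrite the LHS as total minus diagonal
  have hlhs : (∑ i, ∑ j, if i = j then 0 else sqNorm ((C i)ᴴ * C j))
      = (r : ℝ) - D := by
    have : ∀ i : Fin q, (∑ j, if i = j then 0 else sqNorm ((C i)ᴴ * C j))
        = (∑ j, ((A j * A i).trace).re) - ((A i * A i).trace).re := by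
      intro i
      have e1 : ∀ j : Fin q, (if i = j then 0 else sqNorm ((C i)ᴴ * C j))
          = ((A j * A i).trace).re - (if i = j then ((A j * A i).trace).re else 0) := by
        intro j
        by_cases h : i = j <;> simp [h, h1]
      rw [Finset.sum_congr rfl fun j _ => e1 j, Finset.sum_sub_distrib,
        Finset.sum_ite_eq Finset.univ i fun j => ((A j * A i).trace).re]
      simp
    rw [Finset.sum_congr rfl fun i _ => this i, Finset.sum_sub_distrib, htot, hD]
  rw [hlhs]
  -- conclude
  have hq' : (0:ℝ) < q := by exact_mod_cast hq
  rcases Nat.eq_zero_or_pos r with hr | hr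
  · subst hr; simp at hlhs ⊢; nlinarith
  · have hr' : (0:ℝ) < r := by exact_mod_cast hr
    have : (r : ℝ) / q ≤ D := by
      rw [div_le_iff₀ hq']
      nlinarith
    have : (r:ℝ) * (1 - 1/q) = r - r/q := by field_simp
    rw [this]
    linarith [div_le_iff₀ hq' |>.mpr (by nlinarith : (r:ℝ) ≤ D * q)]
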